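/- Let f be a form of degree d in n variables over k which is a limit of direct sums (LDS) form. Then the center Z(f) contains a nonzero nilpotent matrix (so Z(f) is not semisimple). -/

import Mathlib

open MvPolynomial Matrix

/-- The Hessian matrix of a multivariate polynomial. -/
noncomputable def hessian {k : Type*} [Field k] {σ : Type*} (f : MvPolynomial σ k) :
    Matrix σ σ (MvPolynomial σ k) :=
  Matrix.of fun i j => pderiv i (pderiv j f)

/-- The center of a form `f`. -/
def center {k : Type*} [Field k] {σ : Type*} [Fintype σ] (f : MvPolynomial σ k) :
    Set (Matrix σ σ k) :=
  {X | (hessian f * X.map (C : k → MvPolynomial σ k))ᵀ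
        = hessian f * X.map (C : k → MvPolynomial σ k)}

/-- The form obtained from `f` by the linear change of variables `x ↦ P x`. -/
noncomputable def changeVar {k : Type*} [Field k] {σ : Type*} [Fintype σ]
    (P : Matrix σ σ k) (f : MvPolynomial σ k) : MvPolynomial σ k :=
  aeval (fun i => ∑ j, C (P i j) * X j) f

/-- The polynomial `Σ_{i=1}^l x_i · ∂h/∂x_{l+i}`. -/
noncomputable def ldsSum {k : Type*} [Field k] {n : ℕ} (l : ℕ) (h2l : 2 * l ≤ n)
    (h : MvPolynomial (Fin n) k) : MvPolynomial (Fin n) k :=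
  ∑ i : Fin n, if hi : (i : ℕ) < l then
      X i * pderiv (⟨l + (i : ℕ), by omega⟩ : Fin n) h
    else 0

/-- `f` is a limit of direct sums (LDS) form: after an invertible linear change of
variables, `f = Σ_{i=1}^l x_i·∂h/∂x_{l+i} + g` where `h` is a form of degree `d` in the
variables `x_{l+1},…,x_{2l}` and `g` is a form of degree `d` in `x_{l+1},…,x_n`. -/
def IsLDS {k : Type*} [Field k] {n : ℕ} (d : ℕ) (f : MvPolynomial (Fin n) k) : Prop :=
  ∃ P : Matrix (Fin n) (Fin n) k, IsUnit P ∧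
    ∃ (l : ℕ) (_ : 1 ≤ l) (h2l : 2 * l ≤ n), ∃ h g : MvPolynomial (Fin n) k,
      h.IsHomogeneous d ∧ (∀ i ∈ h.vars, l ≤ (i : ℕ) ∧ (i : ℕ) < 2 * l) ∧
      g.IsHomogeneous d ∧ (∀ i ∈ g.vars, l ≤ (i : ℕ)) ∧
      changeVar P f = ldsSum l h2l h + g


lemma pderiv_pderiv_comm' {k : Type*} [CommRing k] {σ : Type*} [DecidableEq σ] (i j : σ)
    (p : MvPolynomial σ k) : pderiv i (pderiv j p) = pderiv j (pderiv i p) := by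
  induction p using MvPolynomial.induction_on with
  | C a => simp [pderiv_C]
  | add p q hp hq => simp [map_add, hp, hq]
  | mul_X p s hp =>
    simp only [pderiv_mul, map_add, hp]
    rcases eq_or_ne s i with rfl | hi <;> rcases eq_or_ne s j with rfl | hj <;>
      simp [pderiv_X_of_ne, *, pderiv_mul]

lemma pderiv_aeval_linear {k : Type*} [Field k] {n : ℕ} (P : Matrix (Fin n) (Fin n) k)
    (a : Fin n) (f : MvPolynomial (Fin n) k) :
    pderiv a (aeval (fun i => ∑ j, C (P i j) * X j) f)
      = ∑ b, aeval (fun i => ∑ j, C (P i j) * X j) (pderiv b f) * C (P b a) := by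
  set s : Fin n → MvPolynomial (Fin n) k := fun i => ∑ j, C (P i j) * X j with hs
  have hds : ∀ b, pderiv a (s b) = C (P b a) := by
    intro b
    simp only [hs, map_sum, pderiv_C_mul]
    rw [Finset.sum_eq_single a]
    · simp
    · intro j _ hj; simp [pderiv_X_of_ne hj]
    · simp
  induction f using MvPolynomial.induction_on with
  | C r => simp [aeval_C, pderiv_C]
  | add p q hp hq =>
    simp only [map_add, hp, hq, add_mul, Finset.sum_add_distrib]
  | mul_X p i hp =>
    rw [_root_.map_mul, aeval_X, pderiv_mul, hp, hds, Finset.sum_mul]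
    have : ∀ b ∈ Finset.univ,
        aeval s (pderiv b (p * X i)) * C (P b a)
          = aeval s (pderiv b p) * C (P b a) * s i
            + (if b = i then aeval s p * C (P b a) else 0) := by
      intro b _
      rcases eq_or_ne b i with rfl | hb
      · simp [pderiv_mul, aeval_X, _root_.map_add, _root_.map_mul]; ring
      · simp [pderiv_mul, pderiv_X_of_ne (Ne.symm hb), hb, aeval_X]; ring
    rw [Finset.sum_congr rfl this, Finset.sum_add_distrib]
    simp [Finset.sum_ite_eq]

lemma hessian_changeVar {k : Type*} [Field k] {n : ℕ} (P : Matrix (Fin n) (Fin n) k)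
    (f : MvPolynomial (Fin n) k) :
    hessian (changeVar P f)
      = (Pᵀ.map (C : k → MvPolynomial (Fin n) k))
        * ((hessian f).map (aeval fun i => ∑ j, C (P i j) * X j))
        * (P.map (C : k → MvPolynomial (Fin n) k)) := by
  apply Matrix.ext
  intro i j
  simp only [hessian, changeVar, Matrix.of_apply, Matrix.mul_apply, Matrix.map_apply,
    Matrix.transpose_apply]
  rw [pderiv_aeval_linear, map_sum]
  simp only [pderiv_mul, pderiv_C, mul_zero, add_zero, pderiv_aeval_linear, Finset.sum_mul]
  exact Finset.sum_congr rfl fun b _ => Finset.sum_congr rfl fun c _ => by ring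

section conj
variable {k : Type*} [Field k] {n : ℕ}

lemma aeval_linear_comp (P Q : Matrix (Fin n) (Fin n) k) (p : MvPolynomial (Fin n) k) :
    aeval (fun i => ∑ j, C (Q i j) * X j) (aeval (fun i => ∑ j, C (P i j) * X j) p)
      = aeval (fun i => ∑ j, C ((P * Q) i j) * X j) p := by
  set s1 : Fin n → MvPolynomial (Fin n) k := fun i => ∑ j, C (P i j) * X j
  set s2 : Fin n → MvPolynomial (Fin n) k := fun i => ∑ j, C (Q i j) * X j
  have : (aeval s2).comp (aeval s1)
      = (aeval (fun i => ∑ j, C ((P * Q) i j) * X j) :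
          MvPolynomial (Fin n) k →ₐ[k] MvPolynomial (Fin n) k) := by
    apply MvPolynomial.algHom_ext
    intro i
    simp only [AlgHom.comp_apply, aeval_X, s1, s2, map_sum, _root_.map_mul, aeval_C,
      algebraMap_eq]
    simp only [Finset.mul_sum]
    rw [Finset.sum_comm]
    refine Finset.sum_congr rfl fun m _ => ?_
    rw [Matrix.mul_apply, map_sum, Finset.sum_mul]
    exact Finset.sum_congr rfl fun x _ => by rw [MvPolynomial.C_mul, mul_assoc]
  exact congrFun (congrArg (fun F => F.toFun) this) p

lemma aeval_linear_injective {P : Matrix (Fin n) (Fin n) k} (hP : IsUnit P) :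
    Function.Injective (aeval (fun i => ∑ j, C (P i j) * X j) :
      MvPolynomial (Fin n) k → MvPolynomial (Fin n) k) := by
  have hdet : IsUnit P.det := (Matrix.isUnit_iff_isUnit_det P).mp hP
  have hPP : P * P⁻¹ = 1 := Matrix.mul_nonsing_inv P hdet
  intro p q hpq
  have := congrArg (aeval (fun i => ∑ j, C (P⁻¹ i j) * X j)) hpq
  rw [aeval_linear_comp, aeval_linear_comp, hPP] at this
  have h1 : (fun i => ∑ j, C ((1 : Matrix (Fin n) (Fin n) k) i j) * X j)
      = (X : Fin n → MvPolynomial (Fin n) k) := by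
    funext i
    rw [Finset.sum_eq_single i]
    · simp
    · intro j _ hj; simp [Matrix.one_apply_ne' hj]
    · simp
  rw [h1] at this
  simpa using this
end conj

section conj2
variable {k : Type*} [Field k] {n : ℕ}

lemma center_conj {P : Matrix (Fin n) (Fin n) k} (hP : IsUnit P) (f : MvPolynomial (Fin n) k)
    {M : Matrix (Fin n) (Fin n) k} (hM : M ∈ center (changeVar P f)) :
    P * M * P⁻¹ ∈ center f := by
  classical
  set φ : MvPolynomial (Fin n) k →ₐ[k] MvPolynomial (Fin n) k :=
    aeval (fun i => ∑ j, C (P i j) * X j) with hφ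
  have hφC : ∀ y : k, φ (C y) = C y := fun y => by simp [hφ, algebraMap_eq]
  have hdet : IsUnit P.det := (Matrix.isUnit_iff_isUnit_det P).mp hP
  have hPP : P * P⁻¹ = 1 := Matrix.mul_nonsing_inv P hdet
  have hPP' : P⁻¹ * P = 1 := Matrix.nonsing_inv_mul P hdet
  -- notation
  set Cm : k →+* MvPolynomial (Fin n) k := MvPolynomial.C with hCm
  set Pc : Matrix (Fin n) (Fin n) (MvPolynomial (Fin n) k) := P.map Cm with hPc
  set Qc : Matrix (Fin n) (Fin n) (MvPolynomial (Fin n) k) := (P⁻¹).map Cm with hQc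
  have hPcQc : Pc * Qc = 1 := by
    rw [hPc, hQc, ← Matrix.map_mul, hPP, ← Matrix.map_one Cm (map_zero Cm) (map_one Cm)]
  have hQcPc : Qc * Pc = 1 := by
    rw [hPc, hQc, ← Matrix.map_mul, hPP', ← Matrix.map_one Cm (map_zero Cm) (map_one Cm)]
  set H : Matrix (Fin n) (Fin n) (MvPolynomial (Fin n) k) := hessian f with hH
  have hHsymm : Hᵀ = H := by
    apply Matrix.ext; intro i j
    exact pderiv_pderiv_comm' _ _ _
  set Hφ : Matrix (Fin n) (Fin n) (MvPolynomial (Fin n) k) := H.map φ with hHφ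
  -- rewrite hypothesis
  have key : (M.map Cm)ᵀ * (Pcᵀ * Hφ * Pc) = (Pcᵀ * Hφ * Pc) * M.map Cm := by
    have h1 : hessian (changeVar P f) = Pcᵀ * Hφ * Pc := by
      rw [hessian_changeVar]
      rw [Matrix.transpose_map]
    have h2 : (hessian (changeVar P f) * M.map ⇑Cm)ᵀ
        = hessian (changeVar P f) * M.map ⇑Cm := hM
    rw [h1] at h2
    have h3 : (Pcᵀ * Hφ * Pc)ᵀ = Pcᵀ * Hφ * Pc := by
      rw [Matrix.transpose_mul, Matrix.transpose_mul, Matrix.transpose_transpose]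
      have : Hφᵀ = Hφ := by rw [hHφ, ← Matrix.transpose_map, hHsymm]
      rw [this, Matrix.mul_assoc]
    calc (M.map ⇑Cm)ᵀ * (Pcᵀ * Hφ * Pc) = (M.map ⇑Cm)ᵀ * (Pcᵀ * Hφ * Pc)ᵀ := by rw [h3]
      _ = ((Pcᵀ * Hφ * Pc) * M.map ⇑Cm)ᵀ := (Matrix.transpose_mul _ _).symm
      _ = (Pcᵀ * Hφ * Pc) * M.map ⇑Cm := h2
  have hPcT : Pcᵀ * Qcᵀ = 1 := by
    rw [← Matrix.transpose_mul, hQcPc, Matrix.transpose_one]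
  have hQcT : Qcᵀ * Pcᵀ = 1 := by
    rw [← Matrix.transpose_mul, hPcQc, Matrix.transpose_one]
  have key2 : Qcᵀ * (M.map ⇑Cm)ᵀ * Pcᵀ * Hφ = Hφ * Pc * M.map ⇑Cm * Qc := by
    have e1 := congrArg (fun A => Qcᵀ * A * Qc) key
    simp only [← Matrix.mul_assoc] at e1
    rw [Matrix.mul_assoc (Qcᵀ * (M.map ⇑Cm)ᵀ * Pcᵀ * Hφ) Pc Qc, hPcQc, Matrix.mul_one,
      hQcT] at e1
    rw [e1, Matrix.one_mul]
  -- now transfer back through φ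
  have hinj : Function.Injective (fun A : Matrix (Fin n) (Fin n) (MvPolynomial (Fin n) k) =>
      A.map φ) := by
    intro A B hAB
    apply Matrix.ext; intro i j
    exact aeval_linear_injective hP (congrFun (congrFun (congrArg Matrix.of.symm hAB) i) j)
  have hconst : ∀ A : Matrix (Fin n) (Fin n) k, (A.map ⇑Cm).map ⇑φ = A.map ⇑Cm := by
    intro A
    rw [Matrix.map_map]
    apply Matrix.ext; intro i j
    exact hφC (A i j)
  have hmapmul : ∀ A B : Matrix (Fin n) (Fin n) (MvPolynomial (Fin n) k),
      (A * B).map ⇑φ = A.map ⇑φ * B.map ⇑φ := by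
    intro A B
    have := Matrix.map_mul (L := A) (M := B) (f := φ.toRingHom)
    simpa using this
  have hYc : ((P * M * P⁻¹).map ⇑Cm : Matrix (Fin n) (Fin n) (MvPolynomial (Fin n) k))
      = Pc * (M.map ⇑Cm) * Qc := by
    rw [show ((P * M * P⁻¹).map ⇑Cm : Matrix (Fin n) (Fin n) (MvPolynomial (Fin n) k))
      = ((P * M) * P⁻¹).map ⇑Cm from rfl, Matrix.map_mul, Matrix.map_mul]
  show (hessian f * ((P * M * P⁻¹).map C))ᵀ = hessian f * ((P * M * P⁻¹).map C)
  rw [show ((P * M * P⁻¹).map C : Matrix (Fin n) (Fin n) (MvPolynomial (Fin n) k))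
    = (P * M * P⁻¹).map ⇑Cm from rfl, hYc, ← hH, Matrix.transpose_mul,
    Matrix.transpose_mul, Matrix.transpose_mul, hHsymm]
  -- goal : Qcᵀ * ((M.map Cm)ᵀ * Pcᵀ) * H = H * (Pc * M.map Cm * Qc)
  apply hinj
  simp only [hmapmul, hconst]
  have hconstT : ∀ A : Matrix (Fin n) (Fin n) k, ((A.map ⇑Cm)ᵀ).map ⇑φ = (A.map ⇑Cm)ᵀ := by
    intro A
    rw [← Matrix.transpose_map, hconst]
  simp only [Matrix.transpose_map, hconstT, hconst]
  simp only [← Matrix.mul_assoc]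
  rw [show Qc.map ⇑φ = Qc from hconst _, show Pc.map ⇑φ = Pc from hconst _]
  exact key2
end conj2

section main
variable {k : Type*} [Field k] {n : ℕ} {l : ℕ} (h2l : 2 * l ≤ n) (hl1 : 1 ≤ l)
  (h g : MvPolynomial (Fin n) k)
  (hhv : ∀ i ∈ h.vars, l ≤ (i : ℕ) ∧ (i : ℕ) < 2 * l)
  (hgv : ∀ i ∈ g.vars, l ≤ (i : ℕ))

include hhv hgv in
lemma pderiv_normalForm {c : Fin n} (hc : (c : ℕ) < l) :
    pderiv c (ldsSum l h2l h + g) = pderiv (⟨l + (c : ℕ), by omega⟩ : Fin n) h := by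
  have hgz : pderiv c g = 0 := by
    apply pderiv_eq_zero_of_notMem_vars
    intro hmem
    exact absurd (hgv c hmem) (by omega)
  have hhz : pderiv c h = 0 := by
    apply pderiv_eq_zero_of_notMem_vars
    intro hmem
    exact absurd (hhv c hmem).1 (by omega)
  rw [map_add, hgz, add_zero, ldsSum, map_sum]
  rw [show (∑ i : Fin n, pderiv c (if hi : (i : ℕ) < l then
      X i * pderiv (⟨l + (i : ℕ), by omega⟩ : Fin n) h else 0))
    = ∑ i : Fin n, (if i = c then pderiv (⟨l + (c : ℕ), by omega⟩ : Fin n) h else 0) from ?_]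
  · simp
  refine Finset.sum_congr rfl fun i _ => ?_
  rcases eq_or_ne i c with rfl | hic
  · rw [dif_pos hc, if_pos rfl, pderiv_mul, pderiv_X_self, one_mul,
      pderiv_pderiv_comm', hhz, map_zero, mul_zero, add_zero]
  · rw [if_neg hic]
    by_cases hi : (i : ℕ) < l
    · rw [dif_pos hi, pderiv_mul, pderiv_X_of_ne hic, pderiv_pderiv_comm', hhz]
      simp
    · rw [dif_neg hi, map_zero]

def ldsN (l : ℕ) : Matrix (Fin n) (Fin n) k :=
  Matrix.of fun i j => if (i : ℕ) < l ∧ (j : ℕ) = l + (i : ℕ) then 1 else 0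

include hhv hgv in
lemma ldsN_entry (a b : Fin n) :
    (hessian (ldsSum l h2l h + g) * (ldsN (k := k) (n := n) l).map (C : k → MvPolynomial (Fin n) k)) a b
      = if l ≤ (b : ℕ) ∧ (b : ℕ) < 2 * l then pderiv a (pderiv b h) else 0 := by
  rw [Matrix.mul_apply]
  by_cases hb : l ≤ (b : ℕ) ∧ (b : ℕ) < 2 * l
  · rw [if_pos hb]
    obtain ⟨hb1, hb2⟩ := hb
    have hbn : (b : ℕ) - l < n := by omega
    set c0 : Fin n := ⟨(b : ℕ) - l, hbn⟩ with hc0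
    rw [Finset.sum_eq_single c0]
    · have : ldsN (k := k) (n := n) l c0 b = 1 := by
        simp only [ldsN, Matrix.of_apply, hc0]
        rw [if_pos ⟨by omega, by omega⟩]
      rw [Matrix.map_apply, this, MvPolynomial.C_1, mul_one, hessian, Matrix.of_apply,
        pderiv_normalForm h2l h g hhv hgv (by simp only [hc0]; omega)]
      have hfin : (⟨l + (c0 : ℕ), by show l + ((b : ℕ) - l) < n; omega⟩ : Fin n) = b :=
        Fin.ext (by show l + ((b : ℕ) - l) = (b : ℕ); omega)
      rw [hfin]
    · intro c _ hc
      have : ldsN (k := k) (n := n) l c b = 0 := by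
        simp only [ldsN, Matrix.of_apply]
        rw [if_neg]
        rintro ⟨h1, h2⟩
        exact hc (Fin.ext (by simp only [hc0]; omega))
      rw [Matrix.map_apply, this, map_zero, mul_zero]
    · simp
  · rw [if_neg hb]
    apply Finset.sum_eq_zero
    intro c _
    have : ldsN (k := k) (n := n) l c b = 0 := by
      simp only [ldsN, Matrix.of_apply]
      rw [if_neg]
      rintro ⟨h1, h2⟩
      exact hb ⟨by omega, by omega⟩
    rw [Matrix.map_apply, this, map_zero, mul_zero]

include hhv hgv in
lemma ldsN_mem_center : ldsN (k := k) (n := n) l ∈ center (ldsSum l h2l h + g) := by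
  apply Matrix.ext
  intro a b
  rw [Matrix.transpose_apply, ldsN_entry h2l h g hhv hgv, ldsN_entry h2l h g hhv hgv]
  have hz : ∀ x : Fin n, ¬ (l ≤ (x : ℕ) ∧ (x : ℕ) < 2 * l) → pderiv x h = 0 := by
    intro x hx
    apply pderiv_eq_zero_of_notMem_vars
    intro hmem
    exact hx (hhv x hmem)
  split_ifs with h1 h2 h2
  · exact pderiv_pderiv_comm' _ _ _
  · rw [pderiv_pderiv_comm', hz b h2, map_zero]
  · rw [pderiv_pderiv_comm', hz a h1, map_zero]
  · rfl
end main

/-- the center of an LDS form contains a nonzero nilpotent matrix. -/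
theorem center_has_nilpotent_of_LDS {k : Type*} [Field k] {n d : ℕ} (hd : 3 ≤ d)
    (hchar : ringChar k = 0 ∨ d < ringChar k)
    (f : MvPolynomial (Fin n) k) (hf : f.IsHomogeneous d) (hlds : IsLDS d f) :
    ∃ N ∈ center f, N ≠ 0 ∧ IsNilpotent N := by
  obtain ⟨P, hP, l, hl1, h2l, h, g, hh_hom, hhv, hg_hom, hgv, heq⟩ := hlds
  have hdet : IsUnit P.det := (Matrix.isUnit_iff_isUnit_det P).mp hP
  have hPP : P * P⁻¹ = 1 := Matrix.mul_nonsing_inv P hdet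
  have hPP' : P⁻¹ * P = 1 := Matrix.nonsing_inv_mul P hdet
  set N : Matrix (Fin n) (Fin n) k := ldsN (k := k) (n := n) l with hNdef
  have hmem : N ∈ center (changeVar P f) := by
    rw [heq]; exact ldsN_mem_center h2l h g hhv hgv
  have hN2 : N * N = 0 := by
    apply Matrix.ext; intro a b
    rw [Matrix.mul_apply, Matrix.zero_apply]
    apply Finset.sum_eq_zero
    intro c _
    by_cases h1 : (a : ℕ) < l ∧ (c : ℕ) = l + (a : ℕ)
    · have h2 : ¬ ((c : ℕ) < l ∧ (b : ℕ) = l + (c : ℕ)) := by omega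
      rw [show N c b = 0 from by simp only [hNdef, ldsN, Matrix.of_apply, if_neg h2],
        mul_zero]
    · rw [show N a c = 0 from by simp only [hNdef, ldsN, Matrix.of_apply, if_neg h1],
        zero_mul]
  have hNne : N ≠ 0 := by
    intro h0
    have h1 : N ⟨0, by omega⟩ ⟨l, by omega⟩ = 1 := by
      simp only [hNdef, ldsN, Matrix.of_apply]
      rw [if_pos]
      constructor
      · show (0 : ℕ) < l; omega
      · show (l : ℕ) = l + 0; omega
    rw [h0] at h1
    simp at h1
  refine ⟨P * N * P⁻¹, center_conj hP f hmem, ?_, 2, ?_⟩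
  · intro h0
    apply hNne
    have e := congrArg (fun A => P⁻¹ * A * P) h0
    simp only [Matrix.mul_zero, Matrix.zero_mul] at e
    calc N = 1 * N * 1 := by rw [Matrix.one_mul, Matrix.mul_one]
      _ = (P⁻¹ * P) * N * (P⁻¹ * P) := by rw [hPP']
      _ = P⁻¹ * (P * N * P⁻¹) * P := by simp only [Matrix.mul_assoc]
      _ = 0 := e
  · rw [pow_two]
    calc (P * N * P⁻¹) * (P * N * P⁻¹)
        = P * (N * ((P⁻¹ * P) * (N * P⁻¹))) := by simp only [Matrix.mul_assoc]
      _ = P * (N * (N * P⁻¹)) := by rw [hPP', Matrix.one_mul]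
      _ = P * ((N * N) * P⁻¹) := by rw [Matrix.mul_assoc]
      _ = 0 := by rw [hN2, Matrix.zero_mul, Matrix.mul_zero]
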